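/- For s > p, the limit σ_{s,p} := lim_{N→∞} 𝒫_s(Q_p; N)/N^{s/p} exists, where Q_p = [0,1]^p, and 0 < σ_{s,p} < ∞. (Existence and finiteness of the limit, given the a priori bound 𝒫_s(Q_p;N) = O(N^{s/p}) and positivity of liminf.) -/

import Mathlib

open scoped ENNReal BigOperators

/-- The `N`-th Riesz `s`-polarization constant of `A`. -/
noncomputable def rPolConst {p : ℕ} (s : ℝ) (A : Set (EuclideanSpace ℝ (Fin p))) (N : ℕ) : ℝ≥0∞ :=
  ⨆ x : {x : Fin N → EuclideanSpace ℝ (Fin p) // ∀ j, x j ∈ A},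
    ⨅ y ∈ A, ∑ j, (edist y (x.1 j) ^ s)⁻¹

/-- The unit cube `[0,1]^p` in `ℝ^p`. -/
def unitCube (p : ℕ) : Set (EuclideanSpace ℝ (Fin p)) :=
  {x | ∀ i, x i ∈ Set.Icc (0 : ℝ) 1}

namespace Stmt7
open Filter Finset

variable {p : ℕ}

noncomputable def pt (p : ℕ) (f : Fin p → ℝ) : EuclideanSpace ℝ (Fin p) :=
  (WithLp.equiv 2 (Fin p → ℝ)).symm f

@[simp] lemma pt_apply (f : Fin p → ℝ) (i : Fin p) : pt p f i = f i := rfl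

lemma abs_coord_le_norm (x : EuclideanSpace ℝ (Fin p)) (i : Fin p) : |x i| ≤ ‖x‖ := by
  rw [EuclideanSpace.norm_eq]
  have h1 : |x i| = Real.sqrt (‖x i‖ ^ 2) := by
    rw [Real.norm_eq_abs, Real.sqrt_sq_eq_abs, abs_abs]
  rw [h1]
  refine Real.sqrt_le_sqrt ?_
  exact Finset.single_le_sum (f := fun j => ‖x j‖ ^ 2) (fun j _ => sq_nonneg _) (Finset.mem_univ i)

lemma abs_coord_le_dist (a b : EuclideanSpace ℝ (Fin p)) (i : Fin p) :
    |a i - b i| ≤ dist a b := by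
  rw [dist_eq_norm]
  have : a i - b i = (a - b) i := by simp [PiLp.sub_apply]
  rw [this]
  exact abs_coord_le_norm _ i

lemma rPolConst_mono (s : ℝ) (A : Set (EuclideanSpace ℝ (Fin p))) (hA : A.Nonempty) :
    Monotone (rPolConst s A) := by
  intro N M hNM
  refine iSup_le fun x => ?_
  rcases Nat.eq_zero_or_pos N with h0 | hN
  · subst h0
    obtain ⟨a, ha⟩ := hA
    refine le_trans (iInf₂_le a ha) ?_
    simp
  · set x' : Fin M → EuclideanSpace ℝ (Fin p) :=
      fun j => if h : (j : ℕ) < N then x.1 ⟨j, h⟩ else x.1 ⟨0, hN⟩ with hx'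
    have hmem : ∀ j, x' j ∈ A := by
      intro j; simp only [hx']; split <;> exact x.2 _
    refine le_iSup_of_le ⟨x', hmem⟩ (le_iInf₂ fun y hy => le_trans (iInf₂_le y hy) ?_)
    have key : ∑ j : Fin N, (edist y (x.1 j) ^ s)⁻¹
        = ∑ j ∈ Finset.univ.map (Fin.castLEEmb hNM), (edist y (x' j) ^ s)⁻¹ := by
      rw [Finset.sum_map]
      refine Finset.sum_congr rfl fun j _ => ?_
      have hj : x' (Fin.castLEEmb hNM j) = x.1 j := by
        simp only [hx']
        split
        · congr 1
        · next h => exact absurd j.isLt h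
      rw [hj]
    rw [key]
    exact Finset.sum_le_sum_of_subset (Finset.subset_univ _)

lemma rPolConst_one_pos (hp : 0 < p) {s : ℝ} (hs : 0 ≤ s) :
    0 < rPolConst s (unitCube p) 1 := by
  have h0 : (0 : EuclideanSpace ℝ (Fin p)) ∈ unitCube p := by
    intro i; simp [unitCube]
  have hub : ∀ y ∈ unitCube p, edist y (0 : EuclideanSpace ℝ (Fin p))
      ≤ ENNReal.ofReal (Real.sqrt p) := by
    intro y hy
    rw [edist_dist]
    refine ENNReal.ofReal_le_ofReal ?_
    rw [dist_zero_right, EuclideanSpace.norm_eq]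
    have : ∑ i : Fin p, ‖y i‖ ^ 2 ≤ (p : ℝ) := by
      calc ∑ i : Fin p, ‖y i‖ ^ 2 ≤ ∑ _i : Fin p, (1:ℝ) := by
            refine Finset.sum_le_sum fun i _ => ?_
            have := hy i
            rw [Real.norm_eq_abs]
            have hyi : |y i| ≤ 1 := abs_le.2 ⟨by linarith [this.1], this.2⟩
            nlinarith [abs_nonneg (y i)]
        _ = (p : ℝ) := by simp
    exact Real.sqrt_le_sqrt this
  have hlb : (ENNReal.ofReal (Real.sqrt p) ^ s)⁻¹
      ≤ rPolConst s (unitCube p) 1 := by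
    refine le_trans ?_ (le_iSup _ (⟨fun _ => 0, fun _ => h0⟩ :
      {x : Fin 1 → EuclideanSpace ℝ (Fin p) // ∀ j, x j ∈ unitCube p}))
    refine le_iInf₂ fun y hy => ?_
    rw [Fin.sum_univ_one]
    exact ENNReal.inv_le_inv.2 (ENNReal.rpow_le_rpow (hub y hy) hs)
  refine lt_of_lt_of_le ?_ hlb
  rw [ENNReal.inv_pos]
  exact ENNReal.rpow_ne_top_of_nonneg hs ENNReal.ofReal_ne_top


lemma rPolConst_selfsim (hp : 0 < p) {s : ℝ} (hs : 0 ≤ s) (m N : ℕ) (hm : 0 < m) :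
    (m : ℝ≥0∞) ^ s * rPolConst s (unitCube p) N
      ≤ rPolConst s (unitCube p) (m ^ p * N) := by
  simp only [rPolConst]
  rw [ENNReal.mul_iSup]
  refine iSup_le fun x => ?_
  have hmR : (0:ℝ) < m := by exact_mod_cast hm
  set z : (Fin p → Fin m) × Fin N → EuclideanSpace ℝ (Fin p) :=
    fun qj => (m : ℝ)⁻¹ • (x.1 qj.2 + pt p (fun i => (qj.1 i : ℝ))) with hz
  have hzmem : ∀ qj, z qj ∈ unitCube p := by
    rintro ⟨q, j⟩ i
    have hx := x.2 j i
    have hq : (q i : ℝ) ≤ m - 1 := by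
      have h1 : (q i : ℕ) + 1 ≤ m := (q i).isLt
      have : (q i : ℝ) + 1 ≤ m := by exact_mod_cast h1
      linarith
    have happ : z (q, j) i = (m:ℝ)⁻¹ * (x.1 j i + q i) := by
      simp [hz, PiLp.smul_apply, PiLp.add_apply, smul_eq_mul]
      ring
    rw [happ]
    constructor
    · exact mul_nonneg (inv_nonneg.2 hmR.le) (add_nonneg hx.1 (Nat.cast_nonneg _))
    · rw [inv_mul_le_iff₀ hmR]
      have := hx.2
      linarith
  have hcard : Fintype.card ((Fin p → Fin m) × Fin N) = m ^ p * N := by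
    simp [Fintype.card_fun]
  set e := Fintype.equivFinOfCardEq hcard with he
  set Z : Fin (m ^ p * N) → EuclideanSpace ℝ (Fin p) := fun k => z (e.symm k) with hZ
  refine le_iSup_of_le ⟨Z, fun k => hzmem _⟩ (le_iInf₂ fun y hy => ?_)
  have hQlt : ∀ i : Fin p, min (⌊(m:ℝ) * y i⌋₊) (m - 1) < m := by
    intro i; exact lt_of_le_of_lt (min_le_right _ _) (by omega)
  set Q : Fin p → Fin m := fun i => ⟨min (⌊(m:ℝ) * y i⌋₊) (m - 1), hQlt i⟩ with hQdef
  set y' : EuclideanSpace ℝ (Fin p) := (m:ℝ) • y - pt p (fun i => (Q i : ℝ)) with hy'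
  have hy'coord : ∀ i, y' i = (m:ℝ) * y i - (Q i : ℝ) := by
    intro i; simp [hy', PiLp.sub_apply, PiLp.smul_apply, smul_eq_mul]
  have hy'mem : y' ∈ unitCube p := by
    intro i
    have h01 := hy i
    have ht0 : (0:ℝ) ≤ (m:ℝ) * y i := mul_nonneg hmR.le h01.1
    have htm : (m:ℝ) * y i ≤ m := by nlinarith [h01.2]
    rw [Set.mem_Icc, hy'coord i]
    rcases le_or_gt (⌊(m:ℝ) * y i⌋₊) (m - 1) with hc | hc
    · have hv : (Q i : ℕ) = ⌊(m:ℝ) * y i⌋₊ := by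
        simp only [hQdef]
        exact min_eq_left hc
      have hQi : ((Q i : ℕ) : ℝ) = (⌊(m:ℝ) * y i⌋₊ : ℝ) := by rw [hv]
      rw [hQi]
      constructor
      · linarith [Nat.floor_le ht0]
      · linarith [Nat.lt_floor_add_one ((m:ℝ) * y i)]
    · have hge : (m : ℝ) ≤ (⌊(m:ℝ) * y i⌋₊ : ℝ) := by
        have : m ≤ ⌊(m:ℝ) * y i⌋₊ := by omega
        exact_mod_cast this
      have hmy : (m:ℝ) ≤ (m:ℝ) * y i := le_trans hge (Nat.floor_le ht0)
      have hv : (Q i : ℕ) = m - 1 := by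
        simp only [hQdef]
        exact min_eq_right (le_of_lt hc)
      have hQi : ((Q i : ℕ) : ℝ) = (m:ℝ) - 1 := by
        rw [hv, Nat.cast_sub hm]
        simp
      rw [hQi]
      constructor
      · linarith
      · linarith
  have hyrec : y = (m:ℝ)⁻¹ • (y' + pt p (fun i => (Q i : ℝ))) := by
    rw [hy', sub_add_cancel, smul_smul, inv_mul_cancel₀ (ne_of_gt hmR), one_smul]
  have hdist : ∀ j, edist y (z (Q, j)) = (m:ℝ≥0∞)⁻¹ * edist y' (x.1 j) := by
    intro j
    have hd : dist y (z (Q, j)) = (m:ℝ)⁻¹ * dist y' (x.1 j) := by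
      have hzq : z (Q, j) = (m:ℝ)⁻¹ • (x.1 j + pt p (fun i => (Q i : ℝ))) := rfl
      rw [hzq]
      conv_lhs => rw [hyrec]
      rw [dist_smul₀, dist_add_right, Real.norm_eq_abs, abs_of_pos (inv_pos.2 hmR)]
    rw [edist_dist, edist_dist, hd, ENNReal.ofReal_mul (inv_nonneg.2 hmR.le),
      ENNReal.ofReal_inv_of_pos hmR, ENNReal.ofReal_natCast]
  have hmne0 : ((m:ℝ≥0∞))⁻¹ ^ s ≠ 0 :=
    (ENNReal.rpow_pos (ENNReal.inv_pos.2 (ENNReal.natCast_ne_top m))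
      (ENNReal.inv_ne_top.2 (by exact_mod_cast hm.ne'))).ne'
  have hmnetop : ((m:ℝ≥0∞))⁻¹ ^ s ≠ ⊤ :=
    ENNReal.rpow_ne_top_of_nonneg hs (ENNReal.inv_ne_top.2 (by exact_mod_cast hm.ne'))
  have hterm : ∀ j, (edist y (z (Q, j)) ^ s)⁻¹
      = (m:ℝ≥0∞) ^ s * (edist y' (x.1 j) ^ s)⁻¹ := by
    intro j
    rw [hdist j, ENNReal.mul_rpow_of_nonneg _ _ hs,
      ENNReal.mul_inv (Or.inl hmne0) (Or.inl hmnetop), ← ENNReal.inv_rpow, inv_inv]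
  calc (m:ℝ≥0∞) ^ s * ⨅ w ∈ unitCube p, ∑ j, (edist w (x.1 j) ^ s)⁻¹
      ≤ (m:ℝ≥0∞) ^ s * ∑ j, (edist y' (x.1 j) ^ s)⁻¹ :=
        mul_le_mul_right (iInf₂_le y' hy'mem) _
    _ = ∑ j, (edist y (z (Q, j)) ^ s)⁻¹ := by
        rw [Finset.mul_sum]
        exact Finset.sum_congr rfl fun j _ => (hterm j).symm
    _ ≤ ∑ qj : (Fin p → Fin m) × Fin N, (edist y (z qj) ^ s)⁻¹ := by
        rw [Fintype.sum_prod_type]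
        exact Finset.single_le_sum
          (f := fun q => ∑ j, (edist y (z (q, j)) ^ s)⁻¹)
          (fun q _ => zero_le) (Finset.mem_univ Q)
    _ = ∑ k, (edist y (Z k) ^ s)⁻¹ := by
        rw [hZ]
        exact (Equiv.sum_comp e.symm fun qj => (edist y (z qj) ^ s)⁻¹).symm


lemma count_Ioo (m : ℕ) (t L : ℝ) :
    ((Finset.univ : Finset (Fin m)).filter
      (fun a : Fin m => t < (a:ℝ) ∧ (a:ℝ) < t + L)).card ≤ ⌊L⌋₊ + 1 := by
  rcases lt_or_ge L 0 with hL | hL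
  · have : ((Finset.univ : Finset (Fin m)).filter
        (fun a : Fin m => t < (a:ℝ) ∧ (a:ℝ) < t + L)) = ∅ := by
      refine Finset.filter_false_of_mem fun a _ => ?_
      rintro ⟨h1, h2⟩
      linarith
    simp [this]
  have hsub : ((Finset.univ : Finset (Fin m)).filter
      (fun a : Fin m => t < (a:ℝ) ∧ (a:ℝ) < t + L)).card
      ≤ (Finset.Icc (⌊t⌋ + 1) ⌊t + L⌋).card := by
    refine Finset.card_le_card_of_injOn (fun a : Fin m => ((a : ℕ) : ℤ)) ?_ ?_
    · intro a ha
      simp only [Finset.mem_coe] at ha ⊢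
      simp only [Finset.mem_filter] at ha
      obtain ⟨-, h1, h2⟩ := ha
      simp only [Finset.mem_Icc]
      constructor
      · exact Int.add_one_le_iff.mpr (Int.floor_lt.mpr (by exact_mod_cast h1))
      · exact Int.le_floor.mpr (by exact_mod_cast h2.le)
    · intro a _ b _ h
      have h' : ((a:ℕ):ℤ) = ((b:ℕ):ℤ) := h
      exact Fin.ext (by exact_mod_cast h')
  refine hsub.trans ?_
  rw [Int.card_Icc]
  have h1 : ⌊t + L⌋ ≤ ⌊t⌋ + ⌊L⌋ + 1 := by
    have h2 : (⌊t + L⌋ : ℝ) ≤ t + L := Int.floor_le (t + L)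
    have h3 : t < (⌊t⌋ : ℝ) + 1 := Int.lt_floor_add_one t
    have h4 : L < (⌊L⌋ : ℝ) + 1 := Int.lt_floor_add_one L
    have h5 : (⌊t + L⌋ : ℝ) < (⌊t⌋ : ℝ) + (⌊L⌋ : ℝ) + 2 := by linarith
    have : ⌊t + L⌋ < ⌊t⌋ + ⌊L⌋ + 2 := by exact_mod_cast h5
    omega
  have h2 : ⌊L⌋ = (⌊L⌋₊ : ℤ) :=
    (Int.floor_toNat L ▸ (Int.toNat_of_nonneg (Int.floor_nonneg.2 hL)).symm)
  omega

lemma count_ball (m : ℕ) (hm : 0 < m) (u R : ℝ) :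
    ((Finset.univ : Finset (Fin m)).filter
      (fun a : Fin m => |((a:ℝ) + 1/2) / m - u| < R)).card ≤ ⌊2 * m * R⌋₊ + 1 := by
  have hmR : (0:ℝ) < m := by exact_mod_cast hm
  refine le_trans (Finset.card_le_card ?_)
    (count_Ioo m ((m:ℝ) * u - m * R - 1/2) (2 * m * R))
  intro a ha
  simp only [Finset.mem_filter] at ha ⊢
  obtain ⟨-, h⟩ := ha
  have h' := abs_lt.1 h
  have hva : (a:ℝ) + 1/2 = m * (((a:ℝ) + 1/2) / m - u) + m * u := by
    field_simp
    ring
  have k1 := mul_lt_mul_of_pos_left h'.1 hmR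
  have k2 := mul_lt_mul_of_pos_left h'.2 hmR
  refine ⟨Finset.mem_univ _, ?_, ?_⟩
  · linarith [k1, hva]
  · linarith [k2, hva]

lemma count_ann (m : ℕ) (hm : 0 < m) (u r : ℝ) :
    ((Finset.univ : Finset (Fin m)).filter
      (fun a : Fin m => r ≤ |((a:ℝ) + 1/2) / m - u| ∧ |((a:ℝ) + 1/2) / m - u| < r + 1/m)).card
      ≤ 6 := by
  have hmR : (0:ℝ) < m := by exact_mod_cast hm
  have hm1 : (m:ℝ) * (1/m) = 1 := by field_simp
  have hsub : (Finset.univ : Finset (Fin m)).filter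
      (fun a : Fin m => r ≤ |((a:ℝ) + 1/2) / m - u| ∧ |((a:ℝ) + 1/2) / m - u| < r + 1/m)
      ⊆ (Finset.univ.filter (fun a : Fin m =>
            ((m:ℝ) * u + (m:ℝ) * r - 3/2) < (a:ℝ) ∧ (a:ℝ) < ((m:ℝ) * u + (m:ℝ) * r - 3/2) + 2))
        ∪ (Finset.univ.filter (fun a : Fin m =>
            ((m:ℝ) * u - (m:ℝ) * r - 3/2) < (a:ℝ) ∧ (a:ℝ) < ((m:ℝ) * u - (m:ℝ) * r - 3/2) + 2)) := by
    intro a ha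
    simp only [Finset.mem_filter, Finset.mem_union] at ha ⊢
    obtain ⟨-, h1, h2⟩ := ha
    have hva : (a:ℝ) + 1/2 = m * (((a:ℝ) + 1/2) / m - u) + m * u := by
      field_simp
      ring
    set v : ℝ := ((a:ℝ) + 1/2) / m - u with hv
    clear_value v
    clear hv
    rcases le_or_gt 0 v with hv0 | hv0
    · left
      rw [abs_of_nonneg hv0] at h1 h2
      have k1 := mul_le_mul_of_nonneg_left h1 hmR.le
      have k2 := mul_lt_mul_of_pos_left h2 hmR
      rw [mul_add, hm1] at k2
      refine ⟨Finset.mem_univ _, ?_, ?_⟩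
      · linarith [k1, hva]
      · linarith [k2, hva]
    · right
      rw [abs_of_neg hv0] at h1 h2
      have k1 := mul_le_mul_of_nonneg_left h1 hmR.le
      have k2 := mul_lt_mul_of_pos_left h2 hmR
      rw [mul_add, hm1] at k2
      rw [mul_neg] at k1 k2
      refine ⟨Finset.mem_univ _, ?_, ?_⟩
      · linarith [k2, hva]
      · linarith [k1, hva]
  refine le_trans (Finset.card_le_card hsub) ?_
  refine le_trans (Finset.card_union_le _ _) ?_
  have c1 := count_Ioo m ((m:ℝ) * u + (m:ℝ) * r - 3/2) 2
  have c2 := count_Ioo m ((m:ℝ) * u - (m:ℝ) * r - 3/2) 2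
  have h2 : ⌊(2:ℝ)⌋₊ = 2 := by norm_num
  rw [h2] at c1 c2
  omega


noncomputable def gridPt (p m : ℕ) (q : Fin p → Fin m) : EuclideanSpace ℝ (Fin p) :=
  pt p (fun i => ((q i : ℝ) + 1/2) / m)

lemma gridPt_mem {m : ℕ} (hm : 0 < m) (q : Fin p → Fin m) : gridPt p m q ∈ unitCube p := by
  intro i
  have hmR : (0:ℝ) < m := by exact_mod_cast hm
  have hq : (q i : ℝ) + 1 ≤ m := by exact_mod_cast (q i).isLt
  have hc : gridPt p m q i = ((q i : ℝ) + 1/2) / m := rfl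
  rw [Set.mem_Icc, hc]
  constructor
  · positivity
  · rw [div_le_one hmR]
    linarith

noncomputable def Kconst (p : ℕ) (s : ℝ) : ℝ≥0∞ :=
  ((6 * p * 5 ^ (p - 1) : ℕ) : ℝ≥0∞) * ∑' k : ℕ, ENNReal.ofReal ((k:ℝ) ^ ((p:ℝ) - 1 - s))

lemma Kconst_ne_top (hp : 0 < p) {s : ℝ} (hs : (p:ℝ) < s) : Kconst p s ≠ ⊤ := by
  apply ENNReal.mul_ne_top (ENNReal.natCast_ne_top _)
  have heq : ∀ k : ℕ, (k:ℝ) ^ ((p:ℝ) - 1 - s) = (((k:ℝ) ^ (s + 1 - p))⁻¹) := by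
    intro k
    have h1 : (p:ℝ) - 1 - s = -(s + 1 - p) := by ring
    rw [h1, Real.rpow_neg (Nat.cast_nonneg k)]
  have hsummable : Summable (fun k : ℕ => ((k:ℝ) ^ (s + 1 - p))⁻¹) := by
    rw [Real.summable_nat_rpow_inv]
    linarith
  calc ∑' k : ℕ, ENNReal.ofReal ((k:ℝ) ^ ((p:ℝ) - 1 - s))
      = ∑' k : ℕ, ENNReal.ofReal (((k:ℝ) ^ (s + 1 - p))⁻¹) :=
        tsum_congr fun k => by rw [heq]
    _ = ENNReal.ofReal (∑' k : ℕ, ((k:ℝ) ^ (s + 1 - p))⁻¹) :=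
        (ENNReal.ofReal_tsum_of_nonneg
          (fun k => inv_nonneg.2 (Real.rpow_nonneg (Nat.cast_nonneg _) _)) hsummable).symm
    _ ≠ ⊤ := ENNReal.ofReal_ne_top

lemma key_est (hp : 0 < p) {s : ℝ} (hs : (p:ℝ) < s) (m : ℕ) (hm : 0 < m)
    (w : EuclideanSpace ℝ (Fin p)) (hw : w ∈ unitCube p) :
    ∑ q ∈ Finset.univ.filter (fun q : Fin p → Fin m =>
        ∃ i, 1/(m:ℝ) ≤ |gridPt p m q i - w i|),
      (edist (gridPt p m q) w ^ s)⁻¹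
    ≤ Kconst p s * (m:ℝ≥0∞) ^ s := by
  classical
  have hs0 : (0:ℝ) ≤ s := le_trans (Nat.cast_nonneg p) hs.le
  have hmR : (0:ℝ) < m := by exact_mod_cast hm
  haveI : Nonempty (Fin p) := Fin.pos_iff_nonempty.1 hp
  have hune : (Finset.univ : Finset (Fin p)).Nonempty := Finset.univ_nonempty
  set D : (Fin p → Fin m) → ℝ :=
    fun q => Finset.univ.sup' hune (fun i => |gridPt p m q i - w i|) with hD
  set b : (Fin p → Fin m) → ℕ := fun q => ⌊(m:ℝ) * D q⌋₊ with hb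
  set G := Finset.univ.filter (fun q : Fin p → Fin m =>
      ∃ i, 1/(m:ℝ) ≤ |gridPt p m q i - w i|) with hG
  have hDeq : ∀ q i, |gridPt p m q i - w i| ≤ D q := by
    intro q i
    exact Finset.le_sup' (f := fun i => |gridPt p m q i - w i|) (Finset.mem_univ i)
  have hD0 : ∀ q, 0 ≤ D q := by
    intro q
    obtain ⟨i⟩ := (inferInstance : Nonempty (Fin p))
    exact le_trans (abs_nonneg _) (hDeq q i)
  have hDle : ∀ q, D q ≤ 2 := by
    intro q
    refine Finset.sup'_le _ _ fun i _ => ?_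
    have h1 := (gridPt_mem hm q) i
    have h2 := hw i
    rw [abs_le]
    constructor <;> [linarith [h1.1, h2.2]; linarith [h1.2, h2.1]]
  have hedist : ∀ q, ENNReal.ofReal (D q) ≤ edist (gridPt p m q) w := by
    intro q
    obtain ⟨i, -, hieq⟩ := Finset.exists_mem_eq_sup' hune (fun i => |gridPt p m q i - w i|)
    have hgw : D q = |gridPt p m q i - w i| := hieq
    rw [edist_dist, hgw]
    exact ENNReal.ofReal_le_ofReal (abs_coord_le_dist _ _ i)
  have hDlb : ∀ q ∈ G, 1/(m:ℝ) ≤ D q := by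
    intro q hq
    rw [hG, Finset.mem_filter] at hq
    obtain ⟨-, i, hi⟩ := hq
    exact le_trans hi (hDeq q i)
  -- fiber cardinality bound
  have hfiber : ∀ k : ℕ, 1 ≤ k →
      (G.filter (fun q => b q = k)).card ≤ 6 * p * (2*k+3)^(p-1) := by
    intro k hk
    set Ball : Fin p → Finset (Fin m) := fun j => Finset.univ.filter
      (fun a : Fin m => |((a:ℝ) + 1/2) / m - w j| < ((k:ℝ)+1)/m) with hBall
    set AnnB : Fin p → Finset (Fin m) := fun j => Finset.univ.filter
      (fun a : Fin m => (k:ℝ)/m ≤ |((a:ℝ) + 1/2) / m - w j|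
        ∧ |((a:ℝ) + 1/2) / m - w j| < (k:ℝ)/m + 1/m) with hAnnB
    have hBallcard : ∀ j, (Ball j).card ≤ 2*k+3 := by
      intro j
      rw [hBall]
      refine le_trans (count_ball m hm (w j) (((k:ℝ)+1)/m)) ?_
      have h2m : 2 * (m:ℝ) * (((k:ℝ)+1)/m) = ((2*k+2 : ℕ) : ℝ) := by
        field_simp
        push_cast
        ring
      rw [h2m, Nat.floor_natCast]
    have hAnnBcard : ∀ j, (AnnB j).card ≤ 6 := by
      intro j
      rw [hAnnB]
      exact count_ann m hm (w j) ((k:ℝ)/m)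
    have hsub : G.filter (fun q => b q = k) ⊆
        Finset.univ.biUnion (fun i : Fin p =>
          Fintype.piFinset (fun j => if j = i then AnnB j else Ball j)) := by
      intro q hq
      rw [Finset.mem_filter] at hq
      obtain ⟨hqG, hbq⟩ := hq
      have hbq' : ⌊(m:ℝ) * D q⌋₊ = k := hbq
      have hmD0 : (0:ℝ) ≤ (m:ℝ) * D q := mul_nonneg hmR.le (hD0 q)
      have hk1 : (k:ℝ) ≤ (m:ℝ) * D q := by
        have h := Nat.floor_le hmD0
        rw [hbq'] at h
        exact h
      have hk2 : (m:ℝ) * D q < (k:ℝ) + 1 := by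
        have h := Nat.lt_floor_add_one ((m:ℝ) * D q)
        rw [hbq'] at h
        exact_mod_cast h
      have hDk1 : (k:ℝ)/m ≤ D q := (div_le_iff₀ hmR).2 (by linarith)
      have hDk2 : D q < ((k:ℝ)+1)/m := (lt_div_iff₀ hmR).2 (by linarith)
      obtain ⟨i, -, hieq⟩ := Finset.exists_mem_eq_sup' hune (fun i => |gridPt p m q i - w i|)
      have hgw : |gridPt p m q i - w i| = D q := hieq.symm
      rw [Finset.mem_biUnion]
      refine ⟨i, Finset.mem_univ _, ?_⟩
      rw [Fintype.mem_piFinset]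
      intro j
      by_cases hji : j = i
      · subst hji
        rw [if_pos rfl, hAnnB]
        simp only [Finset.mem_filter]
        have hc : |((q j : ℝ) + 1/2)/(m:ℝ) - w j| = |gridPt p m q j - w j| := rfl
        rw [hc, hgw]
        refine ⟨Finset.mem_univ _, hDk1, ?_⟩
        have hdd : ((k:ℝ)+1)/m = (k:ℝ)/m + 1/m := by ring
        rw [← hdd]
        exact hDk2
      · rw [if_neg hji, hBall]
        simp only [Finset.mem_filter]
        have hc : |((q j : ℝ) + 1/2)/(m:ℝ) - w j| = |gridPt p m q j - w j| := rfl
        rw [hc]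
        exact ⟨Finset.mem_univ _, lt_of_le_of_lt (hDeq q j) hDk2⟩
    refine le_trans (Finset.card_le_card hsub) ?_
    refine le_trans (Finset.card_biUnion_le) ?_
    have hpi : ∀ i : Fin p,
        (Fintype.piFinset (fun j => if j = i then AnnB j else Ball j)).card
        ≤ 6 * (2*k+3)^(p-1) := by
      intro i
      rw [Fintype.card_piFinset]
      rw [← Finset.mul_prod_erase Finset.univ _ (Finset.mem_univ i)]
      rw [if_pos rfl]
      have h1 : ∏ j ∈ Finset.univ.erase i, (if j = i then AnnB j else Ball j).card
          ≤ (2*k+3)^(p-1) := by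
        have hterm : ∀ j ∈ Finset.univ.erase i,
            (if j = i then AnnB j else Ball j).card ≤ 2*k+3 := by
          intro j hj
          rw [if_neg (Finset.ne_of_mem_erase hj)]
          exact hBallcard j
        calc ∏ j ∈ Finset.univ.erase i, (if j = i then AnnB j else Ball j).card
            ≤ ∏ _j ∈ Finset.univ.erase i, (2*k+3) := Finset.prod_le_prod' hterm
          _ = (2*k+3)^(p-1) := by
              rw [Finset.prod_const, Finset.card_erase_of_mem (Finset.mem_univ i)]
              simp
      exact Nat.mul_le_mul (hAnnBcard i) h1
    calc ∑ i : Fin p, (Fintype.piFinset (fun j => if j = i then AnnB j else Ball j)).card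
        ≤ ∑ _i : Fin p, 6 * (2*k+3)^(p-1) := Finset.sum_le_sum fun i _ => hpi i
      _ = p * (6 * (2*k+3)^(p-1)) := by simp [Finset.sum_const, Finset.card_univ]
      _ = 6 * p * (2*k+3)^(p-1) := by ring
  -- members of G have buckets in [1, 2m]
  have hbmem : ∀ q ∈ G, b q ∈ Finset.Icc 1 (2*m) := by
    intro q hq
    have hb1 : (1:ℝ) ≤ (m:ℝ) * D q := by
      calc (1:ℝ) = m * (1/m) := by field_simp
        _ ≤ m * D q := mul_le_mul_of_nonneg_left (hDlb q hq) hmR.le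
    rw [Finset.mem_Icc]
    constructor
    · show 1 ≤ ⌊(m:ℝ) * D q⌋₊
      apply Nat.le_floor
      rw [Nat.cast_one]
      exact hb1
    · show ⌊(m:ℝ) * D q⌋₊ ≤ 2 * m
      calc ⌊(m:ℝ) * D q⌋₊ ≤ ⌊(m:ℝ) * 2⌋₊ :=
            Nat.floor_le_floor (mul_le_mul_of_nonneg_left (hDle q) hmR.le)
        _ = 2 * m := by
            have h2m : (m:ℝ) * 2 = ((2*m : ℕ) : ℝ) := by push_cast; ring
            rw [h2m, Nat.floor_natCast]
  calc ∑ q ∈ G, (edist (gridPt p m q) w ^ s)⁻¹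
      ≤ ∑ q ∈ G, ((ENNReal.ofReal ((b q : ℝ)/m)) ^ s)⁻¹ := by
        refine Finset.sum_le_sum fun q hq => ?_
        apply ENNReal.inv_le_inv.2
        apply ENNReal.rpow_le_rpow _ hs0
        refine le_trans ?_ (hedist q)
        apply ENNReal.ofReal_le_ofReal
        rw [div_le_iff₀ hmR]
        show ((⌊(m:ℝ) * D q⌋₊ : ℝ)) ≤ D q * m
        calc ((⌊(m:ℝ) * D q⌋₊ : ℝ)) ≤ (m:ℝ) * D q := Nat.floor_le (mul_nonneg hmR.le (hD0 q))
          _ = D q * m := by ring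
    _ = ∑ k ∈ G.image b, (G.filter (fun q => b q = k)).card
          • ((ENNReal.ofReal ((k : ℝ)/m)) ^ s)⁻¹ :=
        Finset.sum_comp (fun k : ℕ => ((ENNReal.ofReal ((k : ℝ)/m)) ^ s)⁻¹) b
    _ ≤ ∑ k ∈ Finset.Icc 1 (2*m), (G.filter (fun q => b q = k)).card
          • ((ENNReal.ofReal ((k : ℝ)/m)) ^ s)⁻¹ := by
        refine Finset.sum_le_sum_of_subset ?_
        intro k hk
        obtain ⟨q, hqG, rfl⟩ := Finset.mem_image.1 hk
        exact hbmem q hqG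
    _ ≤ ∑ k ∈ Finset.Icc 1 (2*m),
          ((6 * p * 5^(p-1) : ℕ) : ℝ≥0∞) * (m:ℝ≥0∞)^s
            * ENNReal.ofReal ((k:ℝ) ^ ((p:ℝ) - 1 - s)) := by
        refine Finset.sum_le_sum fun k hk => ?_
        have hk1 : 1 ≤ k := (Finset.mem_Icc.1 hk).1
        have hkR : (0:ℝ) < k := by exact_mod_cast hk1
        have hkne : k ≠ 0 := Nat.one_le_iff_ne_zero.1 hk1
        have hkE0 : (k:ℝ≥0∞) ≠ 0 := by exact_mod_cast hkne
        have hkEtop : (k:ℝ≥0∞) ≠ ⊤ := ENNReal.natCast_ne_top k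
        have hkposE : (0:ℝ≥0∞) < (k:ℝ≥0∞) := pos_iff_ne_zero.2 hkE0
        have hgk : ((ENNReal.ofReal ((k : ℝ)/m)) ^ s)⁻¹
            = (m:ℝ≥0∞)^s * ((k:ℝ≥0∞)^s)⁻¹ := by
          rw [ENNReal.ofReal_div_of_pos hmR, ENNReal.ofReal_natCast, ENNReal.ofReal_natCast,
            ENNReal.div_rpow_of_nonneg _ _ hs0]
          rw [ENNReal.inv_div (Or.inr (ENNReal.rpow_ne_top_of_nonneg hs0 hkEtop))
            (Or.inr ((ENNReal.rpow_pos hkposE hkEtop).ne'))]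
          rw [div_eq_mul_inv]
        rw [nsmul_eq_mul, hgk]
        have hcard : ((G.filter (fun q => b q = k)).card : ℝ≥0∞)
            ≤ ((6 * p * 5^(p-1) : ℕ) : ℝ≥0∞) * (k:ℝ≥0∞)^((p:ℝ)-1) := by
          have h1 : (G.filter (fun q => b q = k)).card ≤ 6 * p * (2*k+3)^(p-1) :=
            hfiber k hk1
          have h2 : 6 * p * (2*k+3)^(p-1) ≤ 6 * p * (5*k)^(p-1) :=
            Nat.mul_le_mul_left _ (Nat.pow_le_pow_left (by omega) _)
          have h3 : 6 * p * (5*k)^(p-1) = 6 * p * 5^(p-1) * k^(p-1) := by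
            rw [Nat.mul_pow]; ring
          have h4 : (G.filter (fun q => b q = k)).card ≤ 6 * p * 5^(p-1) * k^(p-1) := by
            omega
          calc ((G.filter (fun q => b q = k)).card : ℝ≥0∞)
              ≤ ((6 * p * 5^(p-1) * k^(p-1) : ℕ) : ℝ≥0∞) := by exact_mod_cast h4
            _ = ((6 * p * 5^(p-1) : ℕ) : ℝ≥0∞) * ((k:ℝ≥0∞))^((p-1 : ℕ)) := by
                push_cast; ring
            _ = ((6 * p * 5^(p-1) : ℕ) : ℝ≥0∞) * (k:ℝ≥0∞)^((p:ℝ)-1) := by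
                rw [← ENNReal.rpow_natCast (k:ℝ≥0∞) (p-1)]
                congr 2
                rw [Nat.cast_sub hp]
                simp
        calc ((G.filter (fun q => b q = k)).card : ℝ≥0∞) * ((m:ℝ≥0∞)^s * ((k:ℝ≥0∞)^s)⁻¹)
            ≤ (((6 * p * 5^(p-1) : ℕ) : ℝ≥0∞) * (k:ℝ≥0∞)^((p:ℝ)-1))
              * ((m:ℝ≥0∞)^s * ((k:ℝ≥0∞)^s)⁻¹) := mul_le_mul_left hcard _
          _ = ((6 * p * 5^(p-1) : ℕ) : ℝ≥0∞) * (m:ℝ≥0∞)^s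
              * ((k:ℝ≥0∞)^((p:ℝ)-1) * ((k:ℝ≥0∞)^s)⁻¹) := by ring
          _ = ((6 * p * 5^(p-1) : ℕ) : ℝ≥0∞) * (m:ℝ≥0∞)^s
              * ENNReal.ofReal ((k:ℝ) ^ ((p:ℝ) - 1 - s)) := by
            congr 1
            rw [← ENNReal.rpow_neg, ← ENNReal.rpow_add _ _ hkE0 hkEtop]
            have hexp : (p:ℝ) - 1 + (-s) = (p:ℝ) - 1 - s := by ring
            rw [hexp]
            rw [show (k:ℝ≥0∞) = ENNReal.ofReal (k:ℝ) from (ENNReal.ofReal_natCast k).symm]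
            rw [ENNReal.ofReal_rpow_of_pos hkR]
    _ = ((6 * p * 5^(p-1) : ℕ) : ℝ≥0∞) * (m:ℝ≥0∞)^s
          * ∑ k ∈ Finset.Icc 1 (2*m), ENNReal.ofReal ((k:ℝ) ^ ((p:ℝ) - 1 - s)) := by
        rw [Finset.mul_sum]
    _ ≤ ((6 * p * 5^(p-1) : ℕ) : ℝ≥0∞) * (m:ℝ≥0∞)^s
          * ∑' k : ℕ, ENNReal.ofReal ((k:ℝ) ^ ((p:ℝ) - 1 - s)) :=
        mul_le_mul_right (ENNReal.sum_le_tsum _) _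
    _ = Kconst p s * (m:ℝ≥0∞) ^ s := by
        rw [Kconst]; ring


lemma rPolConst_upper (hp : 0 < p) {s : ℝ} (hs : (p:ℝ) < s) :
    ∃ C : ℝ≥0∞, C ≠ ⊤ ∧ ∀ N : ℕ, 1 ≤ N →
      rPolConst s (unitCube p) N ≤ C * (N:ℝ≥0∞) ^ (s/(p:ℝ)) := by
  classical
  have hs0 : (0:ℝ) ≤ s := le_trans (Nat.cast_nonneg p) hs.le
  have hsp0 : (0:ℝ) ≤ s - p := by linarith
  have hpR : (0:ℝ) < p := by exact_mod_cast hp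
  set C : ℝ≥0∞ := 2 * Kconst p s * (12:ℝ≥0∞) ^ (s - (p:ℝ)) with hC
  refine ⟨C, ?_, ?_⟩
  · rw [hC]
    exact ENNReal.mul_ne_top
      (ENNReal.mul_ne_top (by norm_num) (Kconst_ne_top hp hs))
      (ENNReal.rpow_ne_top_of_nonneg hsp0 (by norm_num))
  intro N hN
  -- choose m
  set x0 : ℝ := (N:ℝ) ^ ((1:ℝ)/p) with hx0
  have hx0_1 : (1:ℝ) ≤ x0 := by
    rw [hx0]
    apply Real.one_le_rpow (by exact_mod_cast hN) (by positivity)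
  set m : ℕ := 6 * ⌈x0⌉₊ with hmdef
  have hceil1 : 1 ≤ ⌈x0⌉₊ := Nat.one_le_ceil_iff.2 (by linarith)
  have hm : 0 < m := by omega
  have hmR : (0:ℝ) < m := by exact_mod_cast hm
  have hm12 : (m:ℝ) ≤ 12 * x0 := by
    have h1 : (⌈x0⌉₊ : ℝ) ≤ x0 + 1 := le_of_lt (Nat.ceil_lt_add_one (by linarith))
    have : (m:ℝ) = 6 * (⌈x0⌉₊ : ℝ) := by rw [hmdef]; push_cast; ring
    rw [this]
    linarith
  have hmp : 2 * 3^p * N ≤ m^p := by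
    have h1 : (N:ℝ) ≤ ((⌈x0⌉₊:ℝ))^p := by
      have h2 : x0 ≤ (⌈x0⌉₊:ℝ) := Nat.le_ceil x0
      have h3 : x0^p ≤ ((⌈x0⌉₊:ℝ))^p := pow_le_pow_left₀ (by linarith) h2 p
      have h4 : x0^p = (N:ℝ) := by
        rw [hx0, ← Real.rpow_natCast ((N:ℝ) ^ ((1:ℝ)/p)) p, ← Real.rpow_mul (Nat.cast_nonneg N)]
        rw [one_div, inv_mul_cancel₀ (ne_of_gt hpR), Real.rpow_one]
      linarith
    have h5 : N ≤ ⌈x0⌉₊^p := by exact_mod_cast h1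
    have h6 : m^p = 6^p * ⌈x0⌉₊^p := by rw [hmdef, mul_pow]
    have h7 : 2 * 3^p ≤ 6^p := by
      calc 2 * 3^p ≤ 2^p * 3^p := by
            have h2p : 2 ≤ 2^p := by
              calc 2 = 2^1 := by norm_num
                _ ≤ 2^p := Nat.pow_le_pow_right (by norm_num) hp
            exact Nat.mul_le_mul_right _ h2p
        _ = 6^p := by rw [← Nat.mul_pow]
    calc 2 * 3^p * N ≤ 6^p * N := Nat.mul_le_mul_right _ h7
      _ ≤ 6^p * ⌈x0⌉₊^p := Nat.mul_le_mul_left _ h5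
      _ = m^p := h6.symm
  -- bound the sup
  refine iSup_le fun x => ?_
  -- Good grid points
  set Good := Finset.univ.filter (fun q : Fin p → Fin m =>
      ∀ j : Fin N, ∃ i, 1/(m:ℝ) ≤ |gridPt p m q i - x.1 j i|) with hGood
  -- bad set bound
  have hbad : ((Finset.univ : Finset (Fin p → Fin m)) \ Good).card ≤ N * 3^p := by
    have hsub : (Finset.univ : Finset (Fin p → Fin m)) \ Good ⊆
        Finset.univ.biUnion (fun j : Fin N => Fintype.piFinset (fun i =>
          Finset.univ.filter (fun a : Fin m => |((a:ℝ) + 1/2)/m - x.1 j i| < 1/m))) := by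
      intro q hq
      rw [Finset.mem_sdiff, hGood, Finset.mem_filter] at hq
      obtain ⟨-, hq2⟩ := hq
      push_neg at hq2
      obtain ⟨j, hj⟩ := hq2 (Finset.mem_univ q)
      rw [Finset.mem_biUnion]
      refine ⟨j, Finset.mem_univ _, ?_⟩
      rw [Fintype.mem_piFinset]
      intro i
      simp only [Finset.mem_filter]
      have hc : ((q i : ℝ) + 1/2)/(m:ℝ) - x.1 j i = gridPt p m q i - x.1 j i := rfl
      rw [hc]
      exact ⟨Finset.mem_univ _, hj i⟩
    refine le_trans (Finset.card_le_card hsub) ?_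
    refine le_trans (Finset.card_biUnion_le) ?_
    have hone : ∀ j : Fin N, (Fintype.piFinset (fun i =>
        Finset.univ.filter (fun a : Fin m => |((a:ℝ) + 1/2)/m - x.1 j i| < 1/m))).card
        ≤ 3^p := by
      intro j
      rw [Fintype.card_piFinset]
      calc ∏ i : Fin p, (Finset.univ.filter
            (fun a : Fin m => |((a:ℝ) + 1/2)/m - x.1 j i| < 1/m)).card
          ≤ ∏ _i : Fin p, 3 := by
            refine Finset.prod_le_prod' fun i _ => ?_
            refine le_trans (count_ball m hm (x.1 j i) (1/m)) ?_
            have h2m : 2 * (m:ℝ) * (1/m) = ((2 : ℕ) : ℝ) := by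
              field_simp
              norm_num
            rw [h2m, Nat.floor_natCast]
        _ = 3^p := by simp
    calc ∑ j : Fin N, (Fintype.piFinset (fun i =>
          Finset.univ.filter (fun a : Fin m => |((a:ℝ) + 1/2)/m - x.1 j i| < 1/m))).card
        ≤ ∑ _j : Fin N, 3^p := Finset.sum_le_sum fun j _ => hone j
      _ = N * 3^p := by simp [Finset.sum_const, Finset.card_univ]
  have hcardGood : m^p ≤ 2 * Good.card := by
    have hc1 : ((Finset.univ : Finset (Fin p → Fin m)) \ Good).card + Good.card
        = m^p := by
      rw [Finset.card_sdiff_add_card_eq_card (Finset.subset_univ Good)]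
      rw [Finset.card_univ, Fintype.card_fun, Fintype.card_fin, Fintype.card_fin]
    have key : 2 * (N * 3^p) ≤ m^p := by
      calc 2 * (N * 3^p) = 2 * 3^p * N := by ring
        _ ≤ m^p := hmp
    have h2 : m^p ≤ N*3^p + Good.card := by
      rw [← hc1]
      exact Nat.add_le_add_right hbad _
    have h3 : 2*(m^p) ≤ 2*(N*3^p) + 2*Good.card := by
      calc 2*(m^p) ≤ 2*(N*3^p + Good.card) := Nat.mul_le_mul_left 2 h2
        _ = 2*(N*3^p) + 2*Good.card := by ring
    have h4 : m^p + m^p ≤ m^p + 2*Good.card := by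
      calc m^p + m^p = 2*(m^p) := by ring
        _ ≤ 2*(N*3^p) + 2*Good.card := h3
        _ ≤ m^p + 2*Good.card := Nat.add_le_add_right key _
    exact Nat.le_of_add_le_add_left h4
  have hGoodne : Good.Nonempty := by
    rw [← Finset.card_pos]
    have : 0 < m^p := pow_pos hm p
    omega
  set S : (Fin p → Fin m) → ℝ≥0∞ :=
    fun q => ∑ j, (edist (gridPt p m q) (x.1 j) ^ s)⁻¹ with hS
  obtain ⟨q0, hq0G, hq0min⟩ := Finset.exists_min_image Good S hGoodne
  have hsumG : ∑ q ∈ Good, S q ≤ (N:ℝ≥0∞) * (Kconst p s * (m:ℝ≥0∞)^s) := by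
    calc ∑ q ∈ Good, S q
        = ∑ j : Fin N, ∑ q ∈ Good, (edist (gridPt p m q) (x.1 j) ^ s)⁻¹ :=
          Finset.sum_comm
      _ ≤ ∑ _j : Fin N, (Kconst p s * (m:ℝ≥0∞)^s) := by
          refine Finset.sum_le_sum fun j _ => ?_
          refine le_trans (Finset.sum_le_sum_of_subset ?_) (key_est hp hs m hm (x.1 j) (x.2 j))
          intro q hq
          rw [hGood, Finset.mem_filter] at hq
          rw [Finset.mem_filter]
          exact ⟨hq.1, hq.2 j⟩
      _ = (N:ℝ≥0∞) * (Kconst p s * (m:ℝ≥0∞)^s) := by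
          rw [Finset.sum_const, Finset.card_univ, Fintype.card_fin, nsmul_eq_mul]
  have hmin : (Good.card : ℝ≥0∞) * S q0 ≤ ∑ q ∈ Good, S q := by
    rw [← nsmul_eq_mul]
    exact Finset.card_nsmul_le_sum Good S (S q0) hq0min
  have hMP0 : ((m^p : ℕ) : ℝ≥0∞) ≠ 0 := by
    exact_mod_cast (pow_pos hm p).ne'
  have hMPtop : ((m^p : ℕ) : ℝ≥0∞) ≠ ⊤ := ENNReal.natCast_ne_top _
  have hSq0 : S q0 ≤ 2 * ((N:ℝ≥0∞) * (Kconst p s * (m:ℝ≥0∞)^s)) / ((m^p : ℕ) : ℝ≥0∞) := by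
    rw [ENNReal.le_div_iff_mul_le (Or.inl hMP0) (Or.inl hMPtop)]
    calc S q0 * ((m^p : ℕ) : ℝ≥0∞) ≤ S q0 * ((2 * Good.card : ℕ) : ℝ≥0∞) :=
          mul_le_mul_right (by exact_mod_cast hcardGood) _
      _ = 2 * ((Good.card : ℝ≥0∞) * S q0) := by push_cast; ring
      _ ≤ 2 * ((N:ℝ≥0∞) * (Kconst p s * (m:ℝ≥0∞)^s)) :=
          mul_le_mul_right (le_trans hmin hsumG) _
  -- arithmetic: simplify the bound
  have hmE0 : (m:ℝ≥0∞) ≠ 0 := by exact_mod_cast hm.ne'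
  have hmEtop : (m:ℝ≥0∞) ≠ ⊤ := ENNReal.natCast_ne_top m
  have hNE0 : (N:ℝ≥0∞) ≠ 0 := by exact_mod_cast Nat.one_le_iff_ne_zero.1 hN
  have hNEtop : (N:ℝ≥0∞) ≠ ⊤ := ENNReal.natCast_ne_top N
  have hMPcast : ((m^p : ℕ) : ℝ≥0∞) = (m:ℝ≥0∞) ^ ((p:ℕ):ℝ) := by
    rw [ENNReal.rpow_natCast]
    push_cast
    ring
  have hdivm : 2 * ((N:ℝ≥0∞) * (Kconst p s * (m:ℝ≥0∞)^s)) / ((m^p : ℕ) : ℝ≥0∞)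
      = 2 * Kconst p s * (N:ℝ≥0∞) * (m:ℝ≥0∞) ^ (s - (p:ℝ)) := by
    rw [ENNReal.rpow_sub s ((p:ℕ):ℝ) hmE0 hmEtop, hMPcast]
    rw [ENNReal.div_eq_inv_mul, ENNReal.div_eq_inv_mul]
    ring
  have hmbound : (m:ℝ≥0∞) ≤ 12 * (N:ℝ≥0∞) ^ ((1:ℝ)/p) := by
    have h1 : (m:ℝ≥0∞) = ENNReal.ofReal (m:ℝ) := (ENNReal.ofReal_natCast m).symm
    have h2 : ENNReal.ofReal (m:ℝ) ≤ ENNReal.ofReal (12 * x0) :=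
      ENNReal.ofReal_le_ofReal hm12
    have h3 : ENNReal.ofReal (12 * x0) = 12 * (N:ℝ≥0∞) ^ ((1:ℝ)/p) := by
      rw [ENNReal.ofReal_mul (by norm_num)]
      congr 1
      · exact ENNReal.ofReal_ofNat 12
      · rw [hx0, ← ENNReal.ofReal_rpow_of_nonneg (Nat.cast_nonneg N) (by positivity),
          ENNReal.ofReal_natCast]
    rw [h1]
    rw [h3] at h2
    exact h2
  have hrpowm : (m:ℝ≥0∞) ^ (s - (p:ℝ))
      ≤ (12:ℝ≥0∞) ^ (s - (p:ℝ)) * (N:ℝ≥0∞) ^ ((1:ℝ)/p * (s - (p:ℝ))) := by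
    calc (m:ℝ≥0∞) ^ (s - (p:ℝ)) ≤ (12 * (N:ℝ≥0∞) ^ ((1:ℝ)/p)) ^ (s - (p:ℝ)) :=
          ENNReal.rpow_le_rpow hmbound hsp0
      _ = (12:ℝ≥0∞) ^ (s - (p:ℝ)) * (N:ℝ≥0∞) ^ ((1:ℝ)/p * (s - (p:ℝ))) := by
          rw [ENNReal.mul_rpow_of_nonneg _ _ hsp0, ENNReal.rpow_mul]
  have hNsplit : (N:ℝ≥0∞) * (N:ℝ≥0∞) ^ ((1:ℝ)/p * (s - (p:ℝ))) = (N:ℝ≥0∞) ^ (s/(p:ℝ)) := by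
    have hexp : s/(p:ℝ) = 1 + (1:ℝ)/p * (s - (p:ℝ)) := by
      field_simp
      ring
    rw [hexp, ENNReal.rpow_add 1 _ hNE0 hNEtop, ENNReal.rpow_one]
  refine le_trans (iInf₂_le (gridPt p m q0) (gridPt_mem hm q0)) ?_
  refine le_trans hSq0 ?_
  rw [hdivm]
  calc 2 * Kconst p s * (N:ℝ≥0∞) * (m:ℝ≥0∞) ^ (s - (p:ℝ))
      ≤ 2 * Kconst p s * (N:ℝ≥0∞)
        * ((12:ℝ≥0∞) ^ (s - (p:ℝ)) * (N:ℝ≥0∞) ^ ((1:ℝ)/p * (s - (p:ℝ)))) :=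
        mul_le_mul_right hrpowm _
    _ = (2 * Kconst p s * (12:ℝ≥0∞) ^ (s - (p:ℝ)))
        * ((N:ℝ≥0∞) * (N:ℝ≥0∞) ^ ((1:ℝ)/p * (s - (p:ℝ)))) := by ring
    _ = C * (N:ℝ≥0∞) ^ (s/(p:ℝ)) := by rw [hNsplit, hC]


lemma natdiv_eq (k : ℕ) :
    ((k:ℝ≥0∞)/((k:ℝ≥0∞)+1)) = ENNReal.ofReal ((k:ℝ)/((k:ℝ)+1)) := by
  rw [ENNReal.ofReal_div_of_pos (by positivity), ENNReal.ofReal_natCast,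
    ENNReal.ofReal_add (Nat.cast_nonneg k) zero_le_one, ENNReal.ofReal_natCast,
    ENNReal.ofReal_one]

lemma natdiv_mono {k m : ℕ} (h : k ≤ m) :
    ((k:ℝ≥0∞)/((k:ℝ≥0∞)+1)) ≤ ((m:ℝ≥0∞)/((m:ℝ≥0∞)+1)) := by
  rw [natdiv_eq, natdiv_eq]
  apply ENNReal.ofReal_le_ofReal
  have hkm : (k:ℝ) ≤ m := by exact_mod_cast h
  rw [div_le_div_iff₀ (by positivity) (by positivity)]
  nlinarith

lemma natdiv_rpow_tendsto {s : ℝ} (hs0 : 0 ≤ s) :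
    Filter.Tendsto (fun k : ℕ => ((k:ℝ≥0∞)/((k:ℝ≥0∞)+1))^s)
      Filter.atTop (nhds 1) := by
  have heq : (fun k : ℕ => ((k:ℝ≥0∞)/((k:ℝ≥0∞)+1))^s)
      = fun k : ℕ => ENNReal.ofReal (((k:ℝ)/((k:ℝ)+1))^s) := by
    funext k
    rw [natdiv_eq, ENNReal.ofReal_rpow_of_nonneg (by positivity) hs0]
  rw [heq]
  have h1 : Filter.Tendsto (fun k : ℕ => ((k:ℝ)/((k:ℝ)+1))^s)
      Filter.atTop (nhds 1) := by
    have h2 : Filter.Tendsto (fun k : ℕ => ((k:ℝ)/((k:ℝ)+1))^s)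
        Filter.atTop (nhds ((1:ℝ)^s)) :=
      (tendsto_natCast_div_add_atTop (1:ℝ)).rpow_const (Or.inl one_ne_zero)
    rw [Real.one_rpow] at h2
    exact h2
  have h3 := ENNReal.tendsto_ofReal h1
  rw [ENNReal.ofReal_one] at h3
  exact h3

end Stmt7


open Stmt7 Filter

theorem stmt7 {p : ℕ} (hp : 0 < p) (s : ℝ) (hs : (p : ℝ) < s) :
    ∃ σ : ℝ≥0∞, 0 < σ ∧ σ < ⊤ ∧
      Filter.Tendsto (fun N : ℕ => rPolConst s (unitCube p) N / (N : ℝ≥0∞) ^ (s / p))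
        Filter.atTop (nhds σ) := by
  classical
  have hs0 : (0:ℝ) ≤ s := le_trans (Nat.cast_nonneg p) hs.le
  have hpR : (0:ℝ) < p := by exact_mod_cast hp
  obtain ⟨C, hCtop, hC⟩ := rPolConst_upper hp hs
  have hA : (unitCube p).Nonempty := ⟨0, fun i => by simp [unitCube]⟩
  have hmono := rPolConst_mono s (unitCube p) hA
  set P : ℕ → ℝ≥0∞ := rPolConst s (unitCube p) with hP
  set f : ℕ → ℝ≥0∞ := fun N => P N / (N:ℝ≥0∞)^(s/(p:ℝ)) with hf
  have hfC : ∀ N, 1 ≤ N → f N ≤ C := fun N hN =>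
    ENNReal.div_le_of_le_mul (hC N hN)
  -- main comparison step
  have hstep : ∀ N₀ : ℕ, 1 ≤ N₀ → ∀ k : ℕ, 1 ≤ k → ∀ N : ℕ, k^p*N₀ ≤ N →
      ((k:ℝ≥0∞)/((k:ℝ≥0∞)+1))^s * f N₀ ≤ f N := by
    intro N₀ hN₀ k hk N hkN
    set Q : ℕ → Prop := fun j => j^p*N₀ ≤ N with hQ
    set m : ℕ := Nat.findGreatest Q N with hmdef
    have hkQ : Q k := hkN
    have hkN' : k ≤ N := by
      calc k ≤ k^p := Nat.le_self_pow (by omega) k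
        _ ≤ k^p * N₀ := Nat.le_mul_of_pos_right _ (by omega)
        _ ≤ N := hkN
    have hmk : k ≤ m := Nat.le_findGreatest hkN' hkQ
    have hm0 : 0 < m := lt_of_lt_of_le (by omega) hmk
    have hm1 : m^p*N₀ ≤ N := Nat.findGreatest_spec hkN' hkQ
    have hm2 : N < (m+1)^p*N₀ := by
      by_cases h : m + 1 ≤ N
      · have hng := Nat.findGreatest_is_greatest (n := N) (P := Q)
          (k := m+1) (by omega) h
        simp only [hQ] at hng
        omega
      · push_neg at h
        calc N < N + 1 := Nat.lt_succ_self N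
          _ ≤ m + 1 := by omega
          _ ≤ (m+1)^p := Nat.le_self_pow (by omega) _
          _ ≤ (m+1)^p * N₀ := Nat.le_mul_of_pos_right _ (by omega)
    -- numerator bound
    have hnum : (m:ℝ≥0∞)^s * P N₀ ≤ P N :=
      le_trans (rPolConst_selfsim hp hs0 m N₀ hm0) (hmono hm1)
    -- denominator bound
    have hden : (N:ℝ≥0∞)^(s/(p:ℝ)) ≤ ((m:ℝ≥0∞)+1)^s * (N₀:ℝ≥0∞)^(s/(p:ℝ)) := by
      have h1 : (N:ℝ≥0∞) ≤ (((m+1)^p*N₀ : ℕ) : ℝ≥0∞) := by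
        exact_mod_cast hm2.le
      have h2 : (N:ℝ≥0∞)^(s/(p:ℝ)) ≤ ((((m+1)^p*N₀ : ℕ) : ℝ≥0∞))^(s/(p:ℝ)) :=
        ENNReal.rpow_le_rpow h1 (by positivity)
      refine le_trans h2 (le_of_eq ?_)
      have h3 : (((m+1)^p*N₀ : ℕ) : ℝ≥0∞) = ((m:ℝ≥0∞)+1)^(p:ℕ) * (N₀:ℝ≥0∞) := by
        push_cast
        ring
      rw [h3, ENNReal.mul_rpow_of_nonneg _ _ (by positivity)]
      congr 1
      rw [← ENNReal.rpow_natCast ((m:ℝ≥0∞)+1) p, ← ENNReal.rpow_mul]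
      congr 1
      field_simp
    -- combine
    have hmain : ((m:ℝ≥0∞)^s * P N₀) / (((m:ℝ≥0∞)+1)^s * (N₀:ℝ≥0∞)^(s/(p:ℝ)))
        ≤ f N := ENNReal.div_le_div hnum hden
    have hmid : ((k:ℝ≥0∞)/((k:ℝ≥0∞)+1))^s * f N₀
        ≤ ((m:ℝ≥0∞)/((m:ℝ≥0∞)+1))^s * f N₀ :=
      mul_le_mul_left (ENNReal.rpow_le_rpow (natdiv_mono hmk) hs0) _
    have heqm : ((m:ℝ≥0∞)/((m:ℝ≥0∞)+1))^s * f N₀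
        = ((m:ℝ≥0∞)^s * P N₀) / (((m:ℝ≥0∞)+1)^s * (N₀:ℝ≥0∞)^(s/(p:ℝ))) := by
      have hm1top : ((m:ℝ≥0∞)+1)^s ≠ ⊤ :=
        ENNReal.rpow_ne_top_of_nonneg hs0 (by simp)
      have hm1ne0 : ((m:ℝ≥0∞)+1)^s ≠ 0 :=
        (ENNReal.rpow_pos (lt_of_lt_of_le one_pos le_add_self) (by simp)).ne'
      rw [ENNReal.div_rpow_of_nonneg _ _ hs0]
      show ((m:ℝ≥0∞)^s / ((m:ℝ≥0∞)+1)^s) * (P N₀ / (N₀:ℝ≥0∞)^(s/(p:ℝ))) = _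
      simp only [div_eq_mul_inv]
      rw [ENNReal.mul_inv (Or.inl hm1ne0) (Or.inl hm1top)]
      ring
    exact le_trans (hmid.trans (le_of_eq heqm)) hmain
  -- liminf lower bounds
  have hle_liminf : ∀ N₀, 1 ≤ N₀ → f N₀ ≤ Filter.liminf f Filter.atTop := by
    intro N₀ hN₀
    have hev : ∀ k : ℕ, 1 ≤ k →
        ((k:ℝ≥0∞)/((k:ℝ≥0∞)+1))^s * f N₀ ≤ Filter.liminf f Filter.atTop := by
      intro k hk
      refine Filter.le_liminf_of_le (by isBoundedDefault) ?_
      filter_upwards [Filter.eventually_ge_atTop (k^p*N₀)] with N hNk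
      exact hstep N₀ hN₀ k hk N hNk
    have hfN₀top : f N₀ ≠ ⊤ := (lt_of_le_of_lt (hfC N₀ hN₀) hCtop.lt_top).ne
    have htendk : Filter.Tendsto (fun k : ℕ => ((k:ℝ≥0∞)/((k:ℝ≥0∞)+1))^s * f N₀)
        Filter.atTop (nhds (1 * f N₀)) :=
      ENNReal.Tendsto.mul_const (natdiv_rpow_tendsto hs0) (Or.inl one_ne_zero)
    rw [one_mul] at htendk
    exact le_of_tendsto htendk (Filter.eventually_atTop.2 ⟨1, fun k hk => hev k hk⟩)
  have hlimsup_le : Filter.limsup f Filter.atTop ≤ Filter.liminf f Filter.atTop :=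
    Filter.limsup_le_of_le (by isBoundedDefault)
      (Filter.eventually_atTop.2 ⟨1, fun N hN => hle_liminf N hN⟩)
  have hliminf_le : Filter.liminf f Filter.atTop ≤ Filter.limsup f Filter.atTop :=
    Filter.liminf_le_limsup
  have heq : Filter.limsup f Filter.atTop = Filter.liminf f Filter.atTop :=
    le_antisymm hlimsup_le hliminf_le
  have hCbound : Filter.liminf f Filter.atTop ≤ C :=
    le_trans hliminf_le (Filter.limsup_le_of_le (by isBoundedDefault)
      (Filter.eventually_atTop.2 ⟨1, fun N hN => hfC N hN⟩))
  refine ⟨Filter.liminf f Filter.atTop, ?_, ?_, ?_⟩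
  · have h1 : f 1 ≤ Filter.liminf f Filter.atTop := hle_liminf 1 le_rfl
    have hf1 : f 1 = P 1 := by
      rw [hf]
      simp
    rw [hf1] at h1
    exact lt_of_lt_of_le (rPolConst_one_pos hp hs0) h1
  · exact lt_of_le_of_lt hCbound hCtop.lt_top
  · exact tendsto_of_liminf_eq_limsup rfl heq
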